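/- Let μ̂_n be the empirical mean of n i.i.d. samples from a one-parameter exponential-family distribution with mean μ. For any integers N ≤ M, any x ≥ μ, P(∃ n with N ≤ n ≤ M such that μ̂_n ≥ x) ≤ exp(−N(x−μ)²/(2V₁)), where V₁ is the maximum variance among distributions in the family with mean in [μ, x]. -/

import Mathlib

open MeasureTheory ProbabilityTheory Real Metric
open scoped ENNReal NNReal

section Aux
variable (ρ : Measure ℝ) (hint : ∀ t : ℝ, Integrable (fun y => Real.exp (y * t)) ρ)

lemma exp_aux_bound (t a y : ℝ) :
    Real.exp (y * t + a * |y|) ≤ Real.exp (y * (t + a)) + Real.exp (y * (t - a)) := by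
  rcases abs_cases y with ⟨h, _⟩ | ⟨h, _⟩
  · rw [h]
    refine le_add_of_le_of_nonneg (le_of_eq ?_) (Real.exp_pos _).le
    ring_nf
  · rw [h]
    refine le_add_of_nonneg_of_le (Real.exp_pos _).le (le_of_eq ?_)
    ring_nf

lemma abs_le_exp_abs (y : ℝ) : |y| ≤ Real.exp |y| :=
  le_trans (le_add_of_nonneg_right zero_le_one) (Real.add_one_le_exp _)

lemma abs_mul_exp_le (t y : ℝ) :
    |y * Real.exp (y * t)| ≤ Real.exp (y * (t + 1)) + Real.exp (y * (t - 1)) := by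
  rw [abs_mul, abs_of_pos (Real.exp_pos _)]
  calc |y| * Real.exp (y * t) ≤ Real.exp |y| * Real.exp (y * t) :=
        mul_le_mul_of_nonneg_right (abs_le_exp_abs y) (Real.exp_pos _).le
    _ = Real.exp (y * t + 1 * |y|) := by rw [← Real.exp_add]; ring_nf
    _ ≤ _ := exp_aux_bound t 1 y

lemma sq_mul_exp_le (t y : ℝ) :
    |y ^ 2 * Real.exp (y * t)| ≤ Real.exp (y * (t + 2)) + Real.exp (y * (t - 2)) := by
  rw [abs_mul, abs_of_pos (Real.exp_pos _), abs_of_nonneg (sq_nonneg y)]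
  calc y ^ 2 * Real.exp (y * t) = |y| ^ 2 * Real.exp (y * t) := by rw [sq_abs]
    _ ≤ Real.exp |y| ^ 2 * Real.exp (y * t) := by
        have := abs_le_exp_abs y
        gcongr
    _ = Real.exp (y * t + 2 * |y|) := by
        rw [← Real.exp_nat_mul, ← Real.exp_add]; ring_nf
    _ ≤ _ := exp_aux_bound t 2 y

lemma meas_exp (t : ℝ) : Measurable fun y : ℝ => Real.exp (y * t) :=
  (measurable_id.mul_const t).exp

lemma meas_mul_exp (t : ℝ) : Measurable fun y : ℝ => y * Real.exp (y * t) :=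
  measurable_id.mul (meas_exp t)

lemma meas_sq_mul_exp (t : ℝ) : Measurable fun y : ℝ => y ^ 2 * Real.exp (y * t) :=
  (measurable_id.pow_const 2).mul (meas_exp t)

include hint in
lemma int_mul_exp (t : ℝ) : Integrable (fun y => y * Real.exp (y * t)) ρ :=
  ((hint (t + 1)).add (hint (t - 1))).mono (meas_mul_exp t).aestronglyMeasurable
    (Filter.Eventually.of_forall fun y => by
      show |_| ≤ |_|
      simp only [Pi.add_apply]
      rw [abs_of_nonneg (add_nonneg (Real.exp_pos _).le (Real.exp_pos _).le)]
      exact abs_mul_exp_le t y)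

include hint in
lemma int_sq_mul_exp (t : ℝ) : Integrable (fun y => y ^ 2 * Real.exp (y * t)) ρ :=
  ((hint (t + 2)).add (hint (t - 2))).mono (meas_sq_mul_exp t).aestronglyMeasurable
    (Filter.Eventually.of_forall fun y => by
      show |_| ≤ |_|
      simp only [Pi.add_apply]
      rw [abs_of_nonneg (add_nonneg (Real.exp_pos _).le (Real.exp_pos _).le)]
      exact sq_mul_exp_le t y)



include hint in
lemma hasDerivAt_L (t : ℝ) :
    HasDerivAt (fun u => ∫ y, Real.exp (y * u) ∂ρ) (∫ y, y * Real.exp (y * t) ∂ρ) t := by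
  have h := hasDerivAt_integral_of_dominated_loc_of_deriv_le (μ := ρ)
      (F := fun u y => Real.exp (y * u)) (F' := fun u y => y * Real.exp (y * u))
      (x₀ := t) (bound := fun y => Real.exp (y * (t + 2)) + Real.exp (y * (t - 2)))
      (ball_mem_nhds t one_pos)
      (Filter.Eventually.of_forall fun u => (meas_exp u).aestronglyMeasurable)
      (hint t) ((meas_mul_exp t).aestronglyMeasurable)
      (Filter.Eventually.of_forall fun y => fun u hu => ?_)
      ((hint (t + 2)).add (hint (t - 2)))
      (Filter.Eventually.of_forall fun y => fun u _ => ?_)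
  · exact h.2
  · -- ‖y * exp (y u)‖ ≤ bound
    rw [Real.norm_eq_abs, abs_mul, abs_of_pos (Real.exp_pos _)]
    have hd : |u - t| ≤ 1 := by
      rw [← Real.dist_eq]; exact (mem_ball.mp hu).le.trans (le_refl 1)
    calc |y| * Real.exp (y * u) ≤ Real.exp |y| * Real.exp (y * t + |y|) := by
          refine mul_le_mul (abs_le_exp_abs y) ?_ (Real.exp_pos _).le (Real.exp_pos _).le
          rw [Real.exp_le_exp]
          have : y * u - y * t ≤ |y| := by
            calc y * u - y * t = y * (u - t) := by ring
              _ ≤ |y * (u - t)| := le_abs_self _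
              _ = |y| * |u - t| := abs_mul _ _
              _ ≤ |y| * 1 := mul_le_mul_of_nonneg_left hd (abs_nonneg y)
              _ = |y| := mul_one _
          linarith
      _ = Real.exp (y * t + 2 * |y|) := by rw [← Real.exp_add]; ring_nf
      _ ≤ _ := exp_aux_bound t 2 y
  · -- HasDerivAt (fun u => exp (y u)) (y exp (y u)) u
    simpa [mul_comm] using (hasDerivAt_id u).const_mul y |>.exp

include hint in
lemma hasDerivAt_D1 (t : ℝ) :
    HasDerivAt (fun u => ∫ y, y * Real.exp (y * u) ∂ρ)
      (∫ y, y ^ 2 * Real.exp (y * t) ∂ρ) t := by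
  have h := hasDerivAt_integral_of_dominated_loc_of_deriv_le (μ := ρ)
      (F := fun u y => y * Real.exp (y * u)) (F' := fun u y => y ^ 2 * Real.exp (y * u))
      (x₀ := t) (bound := fun y => Real.exp (y * (t + 3)) + Real.exp (y * (t - 3)))
      (ball_mem_nhds t one_pos)
      (Filter.Eventually.of_forall fun u => (meas_mul_exp u).aestronglyMeasurable)
      (int_mul_exp ρ hint t) ((meas_sq_mul_exp t).aestronglyMeasurable)
      (Filter.Eventually.of_forall fun y => fun u hu => ?_)
      ((hint (t + 3)).add (hint (t - 3)))
      (Filter.Eventually.of_forall fun y => fun u _ => ?_)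
  · exact h.2
  · rw [Real.norm_eq_abs, abs_mul, abs_of_pos (Real.exp_pos _), abs_of_nonneg (sq_nonneg y)]
    have hd : |u - t| ≤ 1 := by
      rw [← Real.dist_eq]; exact (mem_ball.mp hu).le
    have h1 : y * u ≤ y * t + |y| := by
      have : y * u - y * t ≤ |y| := by
        calc y * u - y * t = y * (u - t) := by ring
          _ ≤ |y * (u - t)| := le_abs_self _
          _ = |y| * |u - t| := abs_mul _ _
          _ ≤ |y| * 1 := mul_le_mul_of_nonneg_left hd (abs_nonneg y)
          _ = |y| := mul_one _
      linarith
    calc y ^ 2 * Real.exp (y * u) = |y| ^ 2 * Real.exp (y * u) := by rw [sq_abs]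
      _ ≤ Real.exp |y| ^ 2 * Real.exp (y * t + |y|) := by
          have h2 := abs_le_exp_abs y
          have h3 : Real.exp (y * u) ≤ Real.exp (y * t + |y|) := by
            rw [Real.exp_le_exp]; exact h1
          refine mul_le_mul (by gcongr) h3 (Real.exp_pos _).le ?_
          positivity
      _ = Real.exp (y * t + 3 * |y|) := by
          rw [← Real.exp_nat_mul, ← Real.exp_add]; ring_nf
      _ ≤ _ := exp_aux_bound t 3 y
  · have hexp : HasDerivAt (fun u => Real.exp (y * u)) (y * Real.exp (y * u)) u := by
      simpa [mul_comm] using ((hasDerivAt_id u).const_mul y).exp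
    simpa [pow_two, mul_assoc] using hexp.const_mul y

end Aux

section Fam
variable (ρ : Measure ℝ) (b : ℝ → ℝ) (ν : ℝ → Measure ℝ)
  (hν : ∀ θ, ν θ = ρ.withDensity fun y => ENNReal.ofReal (Real.exp (y * θ - b θ)))
  (hprob : ∀ θ, IsProbabilityMeasure (ν θ))

lemma meas_dens (t : ℝ) : Measurable fun y : ℝ => Real.exp (y * t - b t) :=
  ((measurable_id.mul_const t).sub_const (b t)).exp

include hν hprob in
lemma lint_dens (t : ℝ) :
    ∫⁻ y, ENNReal.ofReal (Real.exp (y * t - b t)) ∂ρ = 1 := by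
  have h := (hprob t).measure_univ
  rw [hν t, withDensity_apply _ MeasurableSet.univ, setLIntegral_univ] at h
  exact h

include hν hprob in
lemma int_dens (t : ℝ) : Integrable (fun y => Real.exp (y * t - b t)) ρ := by
  refine ⟨(meas_dens b t).aestronglyMeasurable, ?_⟩
  rw [hasFiniteIntegral_iff_ofReal (Filter.Eventually.of_forall fun y => (Real.exp_pos _).le)]
  rw [lint_dens ρ b ν hν hprob t]
  exact ENNReal.one_lt_top

include hν hprob in
lemma integral_dens (t : ℝ) : ∫ y, Real.exp (y * t - b t) ∂ρ = 1 := by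
  rw [integral_eq_lintegral_of_nonneg_ae (Filter.Eventually.of_forall fun y => (Real.exp_pos _).le)
    (meas_dens b t).aestronglyMeasurable, lint_dens ρ b ν hν hprob t, ENNReal.toReal_one]

include hν hprob in
lemma hint_exp (t : ℝ) : Integrable (fun y => Real.exp (y * t)) ρ := by
  have h := (int_dens ρ b ν hν hprob t).const_mul (Real.exp (b t))
  refine h.congr (Filter.Eventually.of_forall fun y => ?_)
  show Real.exp (b t) * Real.exp (y * t - b t) = Real.exp (y * t)
  rw [← Real.exp_add]; congr 1; ring

include hν hprob in
lemma L_eq (t : ℝ) : ∫ y, Real.exp (y * t) ∂ρ = Real.exp (b t) := by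
  have h := integral_dens ρ b ν hν hprob t
  have : ∀ y, Real.exp (y * t - b t) = Real.exp (-b t) * Real.exp (y * t) := fun y => by
    rw [← Real.exp_add]; ring_nf
  simp_rw [this] at h
  rw [integral_const_mul] at h
  have hne : Real.exp (-b t) ≠ 0 := (Real.exp_pos _).ne'
  have h2 : Real.exp (b t) * Real.exp (-b t) = 1 := by rw [← Real.exp_add]; simp
  calc ∫ y, Real.exp (y * t) ∂ρ
      = Real.exp (b t) * (Real.exp (-b t) * ∫ y, Real.exp (y * t) ∂ρ) := by
        rw [← mul_assoc, h2, one_mul]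
    _ = Real.exp (b t) := by rw [h, mul_one]

include hν in
lemma integral_nu (t : ℝ) (g : ℝ → ℝ) :
    ∫ y, g y ∂ν t = ∫ y, Real.exp (y * t - b t) * g y ∂ρ := by
  rw [hν t]
  have hm : Measurable fun y : ℝ => (Real.exp (y * t - b t)).toNNReal :=
    (meas_dens b t).real_toNNReal
  rw [show (fun y : ℝ => ENNReal.ofReal (Real.exp (y * t - b t)))
      = fun y : ℝ => ((Real.exp (y * t - b t)).toNNReal : ℝ≥0∞) from rfl]
  rw [integral_withDensity_eq_integral_smul hm g]
  congr 1
  ext y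
  simp [NNReal.smul_def, Real.coe_toNNReal _ (Real.exp_nonneg _)]

include hν in
lemma integrable_nu_iff (t : ℝ) (g : ℝ → ℝ) :
    Integrable g (ν t) ↔ Integrable (fun y => Real.exp (y * t - b t) * g y) ρ := by
  rw [hν t]
  have hm : Measurable fun y : ℝ => (Real.exp (y * t - b t)).toNNReal :=
    (meas_dens b t).real_toNNReal
  rw [show (fun y : ℝ => ENNReal.ofReal (Real.exp (y * t - b t)))
      = fun y : ℝ => ((Real.exp (y * t - b t)).toNNReal : ℝ≥0∞) from rfl]
  rw [integrable_withDensity_iff_integrable_smul hm]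
  constructor <;> intro h <;> refine h.congr (Filter.Eventually.of_forall fun y => ?_) <;>
    simp [NNReal.smul_def, Real.coe_toNNReal _ (Real.exp_nonneg _)]

end Fam

section Analysis

lemma key_analysis (ρ : Measure ℝ) (b : ℝ → ℝ)
    (hb : ∀ θ, b θ = Real.log (∫ y, Real.exp (y * θ) ∂ρ))
    (ν : ℝ → Measure ℝ)
    (hν : ∀ θ, ν θ = ρ.withDensity fun y => ENNReal.ofReal (Real.exp (y * θ - b θ)))
    (hprob : ∀ θ, IsProbabilityMeasure (ν θ))
    (θ₀ μ : ℝ) (hμ : μ = ∫ y, y ∂ν θ₀)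
    (x V₁ : ℝ) (hx : μ ≤ x) (hV₁ : 0 < V₁)
    (hvar : ∀ θ, (∫ y, y ∂ν θ) ∈ Set.Icc μ x →
      ∫ y, (y - ∫ z, z ∂ν θ) ^ 2 ∂ν θ ≤ V₁) :
    b (θ₀ + (x - μ) / V₁) - b θ₀ ≤ (x - μ) / V₁ * μ + V₁ * ((x - μ) / V₁) ^ 2 / 2 := by
  set l : ℝ := (x - μ) / V₁ with hl
  have hl0 : 0 ≤ l := div_nonneg (by linarith) hV₁.le
  have hint : ∀ t : ℝ, Integrable (fun y => Real.exp (y * t)) ρ := hint_exp ρ b ν hν hprob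
  set L : ℝ → ℝ := fun u => ∫ y, Real.exp (y * u) ∂ρ with hLdef
  set D1 : ℝ → ℝ := fun u => ∫ y, y * Real.exp (y * u) ∂ρ with hD1def
  set D2 : ℝ → ℝ := fun u => ∫ y, y ^ 2 * Real.exp (y * u) ∂ρ with hD2def
  have hLe : ∀ t, L t = Real.exp (b t) := L_eq ρ b ν hν hprob
  have hLpos : ∀ t, 0 < L t := fun t => (hLe t) ▸ Real.exp_pos _
  have hL : ∀ t, HasDerivAt L (D1 t) t := hasDerivAt_L ρ hint
  have hD1 : ∀ t, HasDerivAt D1 (D2 t) t := hasDerivAt_D1 ρ hint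
  set m : ℝ → ℝ := fun u => D1 u / L u with hmdef
  set V : ℝ → ℝ := fun u => D2 u / L u - m u ^ 2 with hVdef
  have hbfun : b = fun u => Real.log (L u) := funext hb
  have hb' : ∀ t, HasDerivAt b (m t) t := fun t => by
    rw [hbfun]
    exact (hL t).log (hLpos t).ne'
  have hm : ∀ t, HasDerivAt m (V t) t := fun t => by
    have h := (hD1 t).div (hL t) (hLpos t).ne'
    refine h.congr_deriv ?_
    have hne : L t ≠ 0 := (hLpos t).ne'
    rw [hVdef, hmdef]
    field_simp
  have hmean : ∀ t, ∫ y, y ∂ν t = m t := fun t => by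
    rw [integral_nu ρ b ν hν t]
    have h : ∀ y : ℝ, Real.exp (y * t - b t) * y = Real.exp (-b t) * (y * Real.exp (y * t)) := by
      intro y
      rw [show y * t - b t = -b t + y * t by ring, Real.exp_add]
      ring
    simp_rw [h]
    rw [integral_const_mul]
    show Real.exp (-b t) * D1 t = D1 t / L t
    rw [Real.exp_neg, ← hLe, inv_mul_eq_div]
  have hvareq : ∀ t, ∫ y, (y - m t) ^ 2 ∂ν t = V t := fun t => by
    rw [integral_nu ρ b ν hν t]
    have h : ∀ y : ℝ, Real.exp (y * t - b t) * (y - m t) ^ 2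
        = Real.exp (-b t) * (y ^ 2 * Real.exp (y * t)
            - (2 * m t) * (y * Real.exp (y * t)) + m t ^ 2 * Real.exp (y * t)) := by
      intro y
      have : Real.exp (y * t - b t) = Real.exp (-b t) * Real.exp (y * t) := by
        rw [← Real.exp_add]; congr 1; ring
      rw [this]
      ring
    simp_rw [h]
    have e1 := int_sq_mul_exp ρ hint t
    have e2 := int_mul_exp ρ hint t
    have e3 := hint t
    have hI1 : Integrable
        (fun a : ℝ => a ^ 2 * Real.exp (a * t) - 2 * m t * (a * Real.exp (a * t))) ρ :=
      e1.sub (e2.const_mul _)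
    rw [integral_const_mul, integral_add hI1 (e3.const_mul _),
      integral_sub e1 (e2.const_mul _), integral_const_mul, integral_const_mul]
    show Real.exp (-b t) * (D2 t - 2 * m t * D1 t + m t ^ 2 * L t) = V t
    have hne : L t ≠ 0 := (hLpos t).ne'
    rw [Real.exp_neg, ← hLe, hVdef, hmdef]
    field_simp
    ring
  have hVnonneg : ∀ t, 0 ≤ V t := fun t => by
    rw [← hvareq t]
    exact integral_nonneg fun y => sq_nonneg _
  have hmdiff : Differentiable ℝ m := fun t => (hm t).differentiableAt
  have hmcont : Continuous m := hmdiff.continuous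
  have hmono : Monotone m := by
    apply monotone_of_deriv_nonneg hmdiff
    intro t
    rw [(hm t).deriv]
    exact hVnonneg t
  have hμm : μ = m θ₀ := by rw [hμ, hmean]
  have hvar' : ∀ t, m t ∈ Set.Icc μ x → V t ≤ V₁ := fun t ht => by
    have := hvar t (by rwa [hmean])
    rwa [hmean, hvareq] at this
  -- claim : m ≤ x on [θ₀, θ₀ + l]
  have claim : ∀ t ∈ Set.Icc θ₀ (θ₀ + l), m t ≤ x := by
    by_contra hcon
    push_neg at hcon
    obtain ⟨t₀, ht₀I, ht₀⟩ := hcon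
    set B : Set ℝ := Set.Icc θ₀ (θ₀ + l) ∩ m ⁻¹' Set.Ici x with hBdef
    have hBc : IsClosed B := isClosed_Icc.inter (isClosed_Ici.preimage hmcont)
    have hBne : B.Nonempty := ⟨t₀, ht₀I, ht₀.le⟩
    have hBbdd : BddBelow B := (bddBelow_Icc).mono Set.inter_subset_left
    set c : ℝ := sInf B with hcdef
    have hcB : c ∈ B := hBc.csInf_mem hBne hBbdd
    obtain ⟨hcI, hcx⟩ := hcB
    have hlt : ∀ s ∈ Set.Ico θ₀ c, m s < x := by
      intro s hs
      by_contra hsx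
      push_neg at hsx
      have hsB : s ∈ B := ⟨⟨hs.1, hs.2.le.trans hcI.2⟩, hsx⟩
      exact absurd (csInf_le hBbdd hsB) (not_le.mpr hs.2)
    have hcle : m c ≤ x := by
      rcases eq_or_lt_of_le hcI.1 with hc | hc
      · rw [← hc, ← hμm]; exact hx
      · have htend : Filter.Tendsto m (nhdsWithin c (Set.Iio c)) (nhds (m c)) :=
          (hmcont.tendsto c).mono_left nhdsWithin_le_nhds
        refine le_of_tendsto htend ?_
        filter_upwards [Ioo_mem_nhdsLT_of_mem (Set.mem_Ioc.mpr ⟨hc, le_refl c⟩)] with s hs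
        exact (hlt s ⟨hs.1.le, hs.2⟩).le
    have hceq : m c = x := le_antisymm hcle hcx
    -- V ≤ V₁ on [θ₀, c]
    have hVle : ∀ s ∈ Set.Icc θ₀ c, V s ≤ V₁ := by
      intro s hs
      refine hvar' s ⟨?_, ?_⟩
      · rw [hμm]; exact hmono hs.1
      · rw [← hceq]; exact hmono hs.2
    -- antitone of m - V₁ * id on [θ₀, c]
    have hanti : AntitoneOn (fun s => m s - V₁ * s) (Set.Icc θ₀ c) := by
      apply antitoneOn_of_deriv_nonpos (convex_Icc _ _)
        (Continuous.continuousOn (by fun_prop))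
      · intro s _
        exact ((hmdiff s).sub ((differentiable_id s).const_mul V₁)).differentiableWithinAt
      · intro s hs
        rw [interior_Icc] at hs
        have hd : HasDerivAt (fun s => m s - V₁ * s) (V s - V₁) s := by
          exact ((hm s).sub ((hasDerivAt_id s).const_mul V₁)).congr_deriv (by ring)
        rw [hd.deriv]
        have := hVle s ⟨hs.1.le, hs.2.le⟩
        linarith
    have h1 := hanti (Set.left_mem_Icc.mpr hcI.1) (Set.right_mem_Icc.mpr hcI.1) hcI.1
    simp only [← hμm, hceq] at h1
    -- x - V₁ * c ≤ μ - V₁ * θ₀, so θ₀ + l ≤ c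
    have hcge : θ₀ + l ≤ c := by
      have h2 : (x - μ) / V₁ ≤ c - θ₀ := (div_le_iff₀ hV₁).mpr (by nlinarith)
      rw [hl]
      linarith
    have hc2 : c = θ₀ + l := le_antisymm hcI.2 hcge
    have ht₀c : t₀ = c := le_antisymm (hc2 ▸ ht₀I.2) (csInf_le hBbdd ⟨ht₀I, ht₀.le⟩)
    rw [ht₀c, hceq] at ht₀
    exact lt_irrefl x ht₀
  -- now m s ≤ μ + (s - θ₀) * V₁ is not needed; directly V ≤ V₁ on Icc
  have hVle : ∀ s ∈ Set.Icc θ₀ (θ₀ + l), V s ≤ V₁ := by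
    intro s hs
    refine hvar' s ⟨?_, claim s hs⟩
    rw [hμm]; exact hmono hs.1
  -- C1 : m s ≤ μ + (s - θ₀) * V₁ on Icc
  have hanti : AntitoneOn (fun s => m s - V₁ * s) (Set.Icc θ₀ (θ₀ + l)) := by
    apply antitoneOn_of_deriv_nonpos (convex_Icc _ _)
      (Continuous.continuousOn (by fun_prop))
    · intro s _
      exact ((hmdiff s).sub ((differentiable_id s).const_mul V₁)).differentiableWithinAt
    · intro s hs
      rw [interior_Icc] at hs
      have hd : HasDerivAt (fun s => m s - V₁ * s) (V s - V₁) s := by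
        exact ((hm s).sub ((hasDerivAt_id s).const_mul V₁)).congr_deriv (by ring)
      rw [hd.deriv]
      have := hVle s ⟨hs.1.le, hs.2.le⟩
      linarith
  have hC1 : ∀ s ∈ Set.Icc θ₀ (θ₀ + l), m s ≤ μ + (s - θ₀) * V₁ := by
    intro s hs
    have h1 := hanti (Set.left_mem_Icc.mpr (by linarith)) hs hs.1
    simp only [← hμm] at h1
    nlinarith [h1]
  -- φ antitone
  set φ : ℝ → ℝ := fun s => b s - (μ * s + V₁ * (s - θ₀) ^ 2 / 2) with hφdef
  have hφanti : AntitoneOn φ (Set.Icc θ₀ (θ₀ + l)) := by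
    apply antitoneOn_of_deriv_nonpos (convex_Icc _ _)
    · have hbcont : Continuous b := by
        have : ∀ t, DifferentiableAt ℝ b t := fun t => (hb' t).differentiableAt
        exact (Differentiable.continuous this)
      exact (hbcont.sub (by fun_prop)).continuousOn
    · intro s _
      refine DifferentiableAt.differentiableWithinAt ?_
      exact ((hb' s).differentiableAt.sub (by fun_prop))
    · intro s hs
      rw [interior_Icc] at hs
      have hd : HasDerivAt φ (m s - (μ + V₁ * (s - θ₀))) s := by
        have h2 : HasDerivAt (fun s : ℝ => μ * s + V₁ * (s - θ₀) ^ 2 / 2)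
            (μ + V₁ * (s - θ₀)) s := by
          have ha : HasDerivAt (fun s : ℝ => μ * s) μ s := by
            simpa using (hasDerivAt_id s).const_mul μ
          have hbb : HasDerivAt (fun s : ℝ => V₁ * (s - θ₀) ^ 2 / 2) (V₁ * (s - θ₀)) s := by
            have h3 : HasDerivAt (fun s : ℝ => s - θ₀) 1 s :=
              (hasDerivAt_id s).sub_const θ₀
            have h4 : HasDerivAt (fun s : ℝ => (s - θ₀) ^ 2) (2 * (s - θ₀)) s := by
              exact (h3.pow 2).congr_deriv (by simp)
            have h5 := (h4.const_mul V₁).div_const 2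
            exact h5.congr_deriv (by ring)
          exact ha.add hbb
        exact (hb' s).sub h2
      rw [hd.deriv]
      have := hC1 s ⟨hs.1.le, hs.2.le⟩
      nlinarith [this]
  have hfinal := hφanti (Set.left_mem_Icc.mpr (by linarith))
    (Set.right_mem_Icc.mpr (by linarith)) (by linarith)
  rw [hφdef] at hfinal
  simp only at hfinal
  nlinarith [hfinal]

end Analysis

/-- Maximal inequality for the empirical mean of i.i.d. samples from a
one-parameter exponential-family distribution, with variance bounded by `V₁`
on the mean interval `[μ, x]`. -/
theorem stmt16 {Ω : Type*} [MeasureSpace Ω] [IsProbabilityMeasure (ℙ : Measure Ω)]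
    (ρ : Measure ℝ) (b : ℝ → ℝ)
    (hb : ∀ θ, b θ = Real.log (∫ y, Real.exp (y * θ) ∂ρ))
    (ν : ℝ → Measure ℝ)
    (hν : ∀ θ, ν θ = ρ.withDensity fun y => ENNReal.ofReal (Real.exp (y * θ - b θ)))
    (hprob : ∀ θ, IsProbabilityMeasure (ν θ))
    (θ₀ μ : ℝ) (hμ : μ = ∫ y, y ∂ν θ₀)
    (X : ℕ → Ω → ℝ) (hmeas : ∀ i, Measurable (X i))
    (hlaw : ∀ i, Measure.map (X i) ℙ = ν θ₀)
    (hindep : iIndepFun X ℙ)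
    (x V₁ : ℝ) (hx : μ ≤ x) (hV₁ : 0 < V₁)
    (hvar : ∀ θ, (∫ y, y ∂ν θ) ∈ Set.Icc μ x →
      ∫ y, (y - ∫ z, z ∂ν θ) ^ 2 ∂ν θ ≤ V₁)
    (N M : ℕ) (hN : 0 < N) (hNM : N ≤ M) :
    ℙ {ω | ∃ n, N ≤ n ∧ n ≤ M ∧ x ≤ (∑ i ∈ Finset.range n, X i ω) / n} ≤
      ENNReal.ofReal (Real.exp (-(N : ℝ) * (x - μ) ^ 2 / (2 * V₁))) := by
  have hint : ∀ t : ℝ, Integrable (fun y => Real.exp (y * t)) ρ := hint_exp ρ b ν hν hprob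
  set l : ℝ := (x - μ) / V₁ with hldef
  have hl0 : 0 ≤ l := div_nonneg (by linarith) hV₁.le
  set c : ℝ := b (θ₀ + l) - b θ₀ with hcdef
  have hkey : c ≤ l * μ + V₁ * l ^ 2 / 2 :=
    key_analysis ρ b hb ν hν hprob θ₀ μ hμ x V₁ hx hV₁ hvar
  set d : ℝ := (x - μ) ^ 2 / (2 * V₁) with hddef
  have hd0 : 0 ≤ d := div_nonneg (sq_nonneg _) (by linarith)
  have hdle : d ≤ l * x - c := by
    have heq : l * x - (l * μ + V₁ * l ^ 2 / 2) = d := by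
      rw [hldef, hddef]
      field_simp
      ring
    linarith
  -- the basic i.i.d. factors
  set g : ℝ → ℝ := fun y => Real.exp (l * y - c) with hgdef
  have hgmeas : Measurable g := ((measurable_id.const_mul l).sub_const c).exp
  have hgpos : ∀ y, 0 < g y := fun y => Real.exp_pos _
  have hdens : (fun y => Real.exp (y * θ₀ - b θ₀) * g y)
      = fun y => Real.exp (y * (θ₀ + l) - b (θ₀ + l)) := by
    funext y
    rw [hgdef]
    show Real.exp (y * θ₀ - b θ₀) * Real.exp (l * y - c) = _
    rw [← Real.exp_add, hcdef]
    congr 1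
    ring
  have hgint_nu : Integrable g (ν θ₀) := by
    rw [integrable_nu_iff ρ b ν hν, hdens]
    exact int_dens ρ b ν hν hprob (θ₀ + l)
  have hgmean : ∫ y, g y ∂ν θ₀ = 1 := by
    rw [integral_nu ρ b ν hν, hdens]
    exact integral_dens ρ b ν hν hprob (θ₀ + l)
  set Z : ℕ → Ω → ℝ := fun i ω => g (X i ω) with hZdef
  have hZmeas : ∀ i, Measurable (Z i) := fun i => hgmeas.comp (hmeas i)
  have hZnonneg : ∀ i ω, 0 ≤ Z i ω := fun i ω => (hgpos _).le
  have hZint : ∀ i, Integrable (Z i) ℙ := fun i => by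
    have h := hgint_nu
    rw [← hlaw i] at h
    exact (integrable_map_measure hgmeas.aestronglyMeasurable (hmeas i).aemeasurable).mp h
  have hZmean : ∀ i, ∫ ω, Z i ω ∂ℙ = 1 := fun i => by
    rw [← hgmean, ← hlaw i, integral_map (hmeas i).aemeasurable hgmeas.aestronglyMeasurable]
  have hZindep : iIndepFun Z ℙ :=
    hindep.comp (fun _ => g) fun _ => hgmeas
  set F : ℕ → Ω → ℝ := fun n => ∏ i ∈ Finset.range (n + 1), Z i with hFdef
  have hFprod : ∀ n : ℕ, Integrable (∏ i ∈ Finset.range n, Z i) ℙ ∧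
      (∫ ω, (∏ i ∈ Finset.range n, Z i) ω ∂ℙ) = 1 := by
    intro n
    induction n with
    | zero =>
      constructor
      · rw [Finset.prod_range_zero]; exact integrable_const (1 : ℝ)
      · simp
    | succ n ih =>
      have hprs : (∏ i ∈ Finset.range (n + 1), Z i) = (∏ i ∈ Finset.range n, Z i) * Z n :=
        Finset.prod_range_succ _ _
      have hIndep : IndepFun (∏ i ∈ Finset.range n, Z i) (Z n) ℙ :=
        hZindep.indepFun_prod_range_succ hZmeas n
      rw [hprs]
      refine ⟨hIndep.integrable_mul ih.1 (hZint n), ?_⟩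
      have h2 := hIndep.integral_mul_eq_mul_integral ih.1.aestronglyMeasurable (hZint n).aestronglyMeasurable
      show integral ℙ ((∏ i ∈ Finset.range n, Z i) * Z n) = 1
      rw [h2]
      have h3 : integral ℙ (∏ i ∈ Finset.range n, Z i) = 1 := ih.2
      have h4 : integral ℙ (Z n) = 1 := hZmean n
      rw [h3, h4, mul_one]
  have hFint : ∀ n, Integrable (F n) ℙ := fun n => (hFprod (n + 1)).1
  have hFmean : ∀ n, (∫ ω, F n ω ∂ℙ) = 1 := fun n => (hFprod (n + 1)).2
  have hsm : ∀ i, StronglyMeasurable (X i) := fun i => (hmeas i).stronglyMeasurable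
  set 𝒢 := MeasureTheory.Filtration.natural X hsm with h𝒢def
  have hadp : StronglyAdapted 𝒢 F := by
    intro n
    refine Finset.stronglyMeasurable_prod _ fun i hi => ?_
    have hin : i ≤ n := Nat.lt_succ_iff.mp (Finset.mem_range.mp hi)
    have hXi : StronglyMeasurable[𝒢 n] (X i) :=
      ((Filtration.stronglyAdapted_natural hsm) i).mono (𝒢.mono hin)
    exact (hgmeas.comp hXi.measurable).stronglyMeasurable
  have hmart : Martingale F 𝒢 ℙ := by
    refine martingale_nat hadp hFint fun n => ?_
    have hsplit : F (n + 1) = F n * Z (n + 1) := Finset.prod_range_succ _ _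
    have hintFZ : Integrable (F n * Z (n + 1)) ℙ := hsplit ▸ hFint (n + 1)
    have hcond := condExp_mul_of_stronglyMeasurable_left (hadp n) hintFZ (hZint (n + 1))
    have hSM : StronglyMeasurable[MeasurableSpace.comap (X (n + 1)) inferInstance] (Z (n + 1)) :=
      (hgmeas.comp (comap_measurable (X (n + 1)))).stronglyMeasurable
    have hIndepc : Indep (MeasurableSpace.comap (X (n + 1)) inferInstance) (𝒢 n) ℙ :=
      hindep.indep_comap_natural_of_lt hsm (Nat.lt_succ_self n)
    have hci : ℙ[Z (n + 1)|𝒢 n] =ᵐ[ℙ] fun _ => ∫ ω, Z (n + 1) ω ∂ℙ :=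
      condExp_indep_eq ((hmeas (n + 1)).comap_le) (𝒢.le n)
        hSM hIndepc
    rw [hsplit]
    refine (hcond.trans ?_).symm
    filter_upwards [hci] with ω hω
    simp only [Pi.mul_apply, hω, hZmean (n + 1), mul_one]
  have hFnonneg : 0 ≤ F := by
    intro n ω
    simp only [Pi.zero_apply]
    rw [show F n ω = ∏ i ∈ Finset.range (n + 1), Z i ω from Finset.prod_apply ω _ _]
    exact Finset.prod_nonneg fun i _ => hZnonneg i ω
  set ε : NNReal := (Real.exp ((N : ℝ) * (l * x - c))).toNNReal with hεdef
  have hεcoe : (ε : ℝ) = Real.exp ((N : ℝ) * (l * x - c)) :=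
    Real.coe_toNNReal _ (Real.exp_nonneg _)
  have hmax := maximal_ineq hmart.submartingale hFnonneg (ε := ε) (M - 1)
  -- sums
  have hFeq : ∀ (k : ℕ) (ω : Ω), F k ω
      = Real.exp (l * (∑ i ∈ Finset.range (k + 1), X i ω) - ((k + 1 : ℕ) : ℝ) * c) := by
    intro k ω
    show (∏ i ∈ Finset.range (k + 1), Z i) ω = _
    rw [Finset.prod_apply]
    have : ∀ i ∈ Finset.range (k + 1), Z i ω = Real.exp (l * X i ω - c) := fun i _ => rfl
    rw [Finset.prod_congr rfl this, ← Real.exp_sum]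
    congr 1
    rw [Finset.sum_sub_distrib, ← Finset.mul_sum]
    simp [Finset.sum_const, Finset.card_range]
  have hsub : {ω | ∃ n, N ≤ n ∧ n ≤ M ∧ x ≤ (∑ i ∈ Finset.range n, X i ω) / n}
      ⊆ {ω | (ε : ℝ) ≤ (Finset.range (M - 1 + 1)).sup' Finset.nonempty_range_add_one
          fun k => F k ω} := by
    rintro ω ⟨n, hn1, hn2, hn3⟩
    have hn0 : 0 < n := lt_of_lt_of_le hN hn1
    have hnr : (0 : ℝ) < (n : ℝ) := by exact_mod_cast hn0
    have hSx : (x : ℝ) * n ≤ ∑ i ∈ Finset.range n, X i ω := (le_div_iff₀ hnr).mp hn3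
    have hmem : n - 1 ∈ Finset.range (M - 1 + 1) := Finset.mem_range.mpr (by omega)
    refine Set.mem_setOf.mpr (le_trans ?_ (Finset.le_sup' (fun k => F k ω) hmem))
    rw [hFeq (n - 1) ω]
    have hn1' : n - 1 + 1 = n := Nat.succ_pred_eq_of_pos hn0
    rw [hn1', hεcoe, Real.exp_le_exp]
    have hNn : ((N : ℝ)) ≤ (n : ℝ) := by exact_mod_cast hn1
    have hlc : 0 ≤ l * x - c := le_trans hd0 hdle
    nlinarith [mul_le_mul_of_nonneg_left hSx hl0]
  have hone : ENNReal.ofReal (∫ ω in {ω | (ε : ℝ) ≤ (Finset.range (M - 1 + 1)).sup'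
      Finset.nonempty_range_add_one fun k => F k ω}, F (M - 1) ω ∂ℙ) ≤ 1 := by
    refine le_trans (ENNReal.ofReal_le_ofReal (setIntegral_le_integral (hFint (M - 1))
      (Filter.Eventually.of_forall fun ω => hFnonneg (M - 1) ω))) ?_
    rw [hFmean (M - 1)]
    simp
  have hmax2 : (ε : ℝ≥0∞) * ℙ {ω | (ε : ℝ) ≤ (Finset.range (M - 1 + 1)).sup'
      Finset.nonempty_range_add_one fun k => F k ω} ≤ 1 := le_trans hmax hone
  have hεne : (ε : ℝ≥0∞) ≠ 0 := by
    simp only [hεdef, ne_eq, ENNReal.coe_eq_zero, Real.toNNReal_eq_zero, not_le]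
    exact Real.exp_pos _
  have hmeasle : ℙ {ω | ∃ n, N ≤ n ∧ n ≤ M ∧ x ≤ (∑ i ∈ Finset.range n, X i ω) / n}
      ≤ (ε : ℝ≥0∞)⁻¹ := by
    refine le_trans (measure_mono hsub) ?_
    rw [ENNReal.le_inv_iff_mul_le]
    rwa [mul_comm]
  refine le_trans hmeasle ?_
  have hεinv : (ε : ℝ≥0∞)⁻¹ = ENNReal.ofReal (Real.exp (-((N : ℝ) * (l * x - c)))) := by
    have h1 : (ε : ℝ≥0∞) = ENNReal.ofReal (Real.exp ((N : ℝ) * (l * x - c))) := rfl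
    rw [h1, ← ENNReal.ofReal_inv_of_pos (Real.exp_pos _), ← Real.exp_neg]
  rw [hεinv]
  refine ENNReal.ofReal_le_ofReal ?_
  rw [Real.exp_le_exp]
  have hNd : (0 : ℝ) ≤ (N : ℝ) := Nat.cast_nonneg N
  have heq2 : -(N : ℝ) * (x - μ) ^ 2 / (2 * V₁) = -((N : ℝ) * d) := by
    rw [hddef]
    field_simp
  rw [heq2]
  have := mul_le_mul_of_nonneg_left hdle hNd
  linarith
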